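/- Let R be a K-algebra such that either GKdim(R) < ∞, or R has just infinite GK-dimension (i.e. GKdim(R) = ∞ but GKdim(R/I) < ∞ for every nonzero two-sided ideal I). Then R satisfies the ascending chain condition on completely prime two-sided ideals. In particular, if R is a domain with GKdim(R) < ∞, then every strictly ascending chain of completely prime two-sided ideals of R has length at most GKdim(R). -/

import Mathlib

/-!
Statement 18: let `K` be a field of characteristic zero and `R` a `K`-algebra such that
either `GKdim R < ∞`, or `R` has just infinite GK-dimension (`GKdim R = ∞` but
`GKdim (R/I) < ∞` for every nonzero two-sided ideal `I`). Then `R` satisfies the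
ascending chain condition on completely prime two-sided ideals. In particular, if `R` is
a domain with `GKdim R < ∞`, then every strictly ascending chain of completely prime
two-sided ideals of `R` has length at most `GKdim R`.
-/

open scoped ENNReal

open Filter in
/-- Gelfand–Kirillov dimension of a `K`-algebra `A`:
`sup_V limsup_n log (dim_K (K·1 + V)^n) / log n` over finite-dimensional subspaces `V ⊆ A`. -/
noncomputable def gkDim (K A : Type*) [Field K] [Ring A] [Algebra K A] : ℝ≥0∞ :=
  ⨆ (V : Submodule K A) (_ : FiniteDimensional K ↥V),
    Filter.limsup
      (fun n : ℕ =>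
        ENNReal.ofReal (Real.log (Module.finrank K ↥((1 ⊔ V) ^ n)) / Real.log n))
      Filter.atTop

/-- The quotient of `A` by a ring congruence (e.g. by a two-sided ideal) is again
a `K`-algebra. -/
noncomputable instance quotAlgebra {K A : Type*} [CommSemiring K] [Ring A] [Algebra K A]
    (c : RingCon A) : Algebra K c.Quotient :=
  RingHom.toAlgebra'
    { toFun := fun k => ((algebraMap K A k : A) : c.Quotient)
      map_one' := by show ((algebraMap K A 1 : A) : c.Quotient) = 1; rw [map_one]; rfl
      map_mul' := by
        intro x y
        show ((algebraMap K A (x * y) : A) : c.Quotient) = _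
        rw [map_mul]; rfl
      map_zero' := by show ((algebraMap K A 0 : A) : c.Quotient) = 0; rw [map_zero]; rfl
      map_add' := by
        intro x y
        show ((algebraMap K A (x + y) : A) : c.Quotient) = _
        rw [map_add]; rfl }
    (fun k x => by
      induction x using Quotient.inductionOn' with
      | h a =>
        show ((algebraMap K A k : A) : c.Quotient) * (a : c.Quotient)
            = (a : c.Quotient) * ((algebraMap K A k : A) : c.Quotient)
        rw [← RingCon.coe_mul, ← RingCon.coe_mul, Algebra.commutes])

/-- A two-sided ideal `P` of `R` is completely prime if `R/P` is a domain, i.e. `P` is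
proper and `x y ∈ P` implies `x ∈ P` or `y ∈ P`. -/
def IsCompletelyPrime {R : Type*} [Ring R] (P : TwoSidedIdeal R) : Prop :=
  (1 : R) ∉ P ∧ ∀ x y : R, x * y ∈ P → x ∈ P ∨ y ∈ P

/-- Ordered monomial `x_{k-1}^{a_{k-1}} ⋯ x_1^{a_1} x_0^{a_0}`. -/
def gkMon {R : Type*} [Ring R] : (k : ℕ) → (Fin k → R) → (Fin k → ℕ) → R
  | 0, _, _ => 1
  | (k+1), x, a => gkMon k (fun i => x i.succ) (fun i => a i.succ) * x 0 ^ a 0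

lemma gkMon_succ {R : Type*} [Ring R] (k : ℕ) (x : Fin (k+1) → R) (a : Fin (k+1) → ℕ) :
    gkMon (k+1) x a = gkMon k (fun i => x i.succ) (fun i => a i.succ) * x 0 ^ a 0 := rfl

def gkTail {k : ℕ} (a : Fin (k+1) → ℕ) : Fin k → ℕ := fun i => a i.succ

def gkDown {k : ℕ} (a : Fin (k+1) → ℕ) : Fin (k+1) → ℕ := Fin.cons (a 0 - 1) (gkTail a)

@[simp] lemma gkTail_apply {k : ℕ} (a : Fin (k+1) → ℕ) (i : Fin k) :
    gkTail a i = a i.succ := rfl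

@[simp] lemma gkDown_zero {k : ℕ} (a : Fin (k+1) → ℕ) : gkDown a 0 = a 0 - 1 :=
  Fin.cons_zero _ _

@[simp] lemma gkDown_succ {k : ℕ} (a : Fin (k+1) → ℕ) (i : Fin k) :
    gkDown a i.succ = a i.succ :=
  Fin.cons_succ _ _ _

lemma gkCore {K R : Type*} [Field K] [Ring R] [Algebra K R] (k : ℕ) :
    ∀ (Q : Fin (k+1) → TwoSidedIdeal R), Monotone Q →
    (∀ i, IsCompletelyPrime (Q i)) →
    ∀ (x : Fin k → R), (∀ i : Fin k, x i ∈ Q i.succ) → (∀ i : Fin k, x i ∉ Q i.castSucc) →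
    ∀ (s : Finset (Fin k → ℕ)) (c : (Fin k → ℕ) → K),
      (∑ a ∈ s, c a • gkMon k x a) ∈ Q 0 → ∀ a ∈ s, c a = 0 := by
  induction k with
  | zero =>
    intro Q _ hCP x _ _ s c h a ha
    by_contra hca
    have hsum : ∑ b ∈ s, c b • gkMon 0 x b = c a • gkMon 0 x a := by
      refine Finset.sum_eq_single_of_mem a ha fun b _ hba => ?_
      exact absurd (Subsingleton.elim b a) hba
    rw [hsum] at h
    have h1 : (c a)⁻¹ • (c a • gkMon 0 x a) ∈ Q 0 := by
      rw [Algebra.smul_def]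
      exact (Q 0).mul_mem_left _ _ h
    rw [smul_smul, inv_mul_cancel₀ hca, one_smul] at h1
    exact (hCP 0).1 h1
  | succ k IH =>
    intro Q hQ hCP x hx1 hx2
    suffices H : ∀ (D : ℕ) (s : Finset (Fin (k+1) → ℕ)) (c : (Fin (k+1) → ℕ) → K),
        (∑ a ∈ s, a 0) = D → (∑ a ∈ s, c a • gkMon (k+1) x a) ∈ Q 0 → ∀ a ∈ s, c a = 0 by
      exact fun s c h => H _ s c rfl h
    intro D
    induction D using Nat.strong_induction_on with
    | _ D IHD =>
    intro s c hD h
    classical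
    set x' : Fin k → R := fun i => x i.succ with hx'
    set s0 := s.filter (fun a => a 0 = 0) with hs0def
    set s1 := s.filter (fun a => ¬ (a 0 = 0)) with hs1def
    set A := ∑ a ∈ s0, c a • gkMon k x' (gkTail a) with hA
    set B := ∑ a ∈ s1, c a • (gkMon k x' (gkTail a) * x 0 ^ (a 0 - 1)) with hB
    have hsplitA : ∑ a ∈ s0, c a • gkMon (k+1) x a = A := by
      refine Finset.sum_congr rfl fun a ha => ?_
      have ha0 : a 0 = 0 := (Finset.mem_filter.1 ha).2
      rw [gkMon_succ, ha0, pow_zero, mul_one]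
      rfl
    have hsplitB : ∑ a ∈ s1, c a • gkMon (k+1) x a = B * x 0 := by
      rw [hB, Finset.sum_mul]
      refine Finset.sum_congr rfl fun a ha => ?_
      have ha0 : a 0 ≠ 0 := (Finset.mem_filter.1 ha).2
      rw [gkMon_succ, smul_mul_assoc, mul_assoc, ← pow_succ,
        Nat.sub_add_cancel (Nat.one_le_iff_ne_zero.2 ha0)]
      rfl
    have hsum : A + B * x 0 ∈ Q 0 := by
      rw [← hsplitA, ← hsplitB, Finset.sum_filter_add_sum_filter_not]
      exact h
    have hBx : B * x 0 ∈ Q (Fin.succ 0) := (Q _).mul_mem_left _ _ (hx1 0)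
    have hA1 : A ∈ Q (Fin.succ 0) := by
      have h2 := (Q (Fin.succ 0)).sub_mem (hQ (Fin.zero_le _) hsum) hBx
      simpa using h2
    have hcons0 : ∀ a ∈ s0, Fin.cons 0 (gkTail a) = a := by
      intro a ha
      funext j
      refine Fin.cases ?_ (fun i => ?_) j
      · rw [Fin.cons_zero]; exact ((Finset.mem_filter.1 ha).2).symm
      · rw [Fin.cons_succ]; rfl
    have hs0zero : ∀ a ∈ s0, c a = 0 := by
      intro a ha
      have hinj : ∀ a₁ ∈ s0, ∀ a₂ ∈ s0, gkTail a₁ = gkTail a₂ → a₁ = a₂ := by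
        intro a₁ h₁ a₂ h₂ hfe
        rw [← hcons0 a₁ h₁, ← hcons0 a₂ h₂, hfe]
      have hIH := IH (fun i => Q i.succ)
        (fun i j hij => hQ (Fin.succ_le_succ_iff.mpr hij))
        (fun i => hCP i.succ) x' (fun i => hx1 i.succ)
        (fun i => by
          have h3 := hx2 i.succ
          rwa [← Fin.succ_castSucc] at h3)
        (s0.image gkTail) (fun b => c (Fin.cons 0 b))
        (by
          rw [Finset.sum_image hinj]
          have h4 : ∑ a ∈ s0, c (Fin.cons 0 (gkTail a)) • gkMon k x' (gkTail a) = A := by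
            refine Finset.sum_congr rfl fun b hb => ?_
            rw [hcons0 b hb]
          rw [h4]
          exact hA1)
      have h5 := hIH (gkTail a) (Finset.mem_image_of_mem gkTail ha)
      rw [← hcons0 a ha]
      exact h5
    have hA0 : A = 0 := Finset.sum_eq_zero fun a ha => by rw [hs0zero a ha, zero_smul]
    have hBQ0 : B ∈ Q 0 := by
      rw [hA0, zero_add] at hsum
      refine ((hCP 0).2 B (x 0) hsum).resolve_right ?_
      have h6 := hx2 0
      rwa [Fin.castSucc_zero] at h6
    intro a ha
    by_cases ha0 : a 0 = 0
    · exact hs0zero a (Finset.mem_filter.2 ⟨ha, ha0⟩)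
    · have has1 : a ∈ s1 := Finset.mem_filter.2 ⟨ha, ha0⟩
      have hdinj : ∀ a₁ ∈ s1, ∀ a₂ ∈ s1, gkDown a₁ = gkDown a₂ → a₁ = a₂ := by
        intro a₁ h₁ a₂ h₂ hde
        have h10 : a₁ 0 ≠ 0 := (Finset.mem_filter.1 h₁).2
        have h20 : a₂ 0 ≠ 0 := (Finset.mem_filter.1 h₂).2
        funext j
        refine Fin.cases ?_ (fun i => ?_) j
        · show a₁ 0 = a₂ 0
          have h7 := congrFun hde 0
          simp only [gkDown_zero] at h7
          calc a₁ 0 = (a₁ 0 - 1) + 1 := (Nat.succ_pred_eq_of_pos (Nat.pos_of_ne_zero h10)).symm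
            _ = (a₂ 0 - 1) + 1 := by rw [h7]
            _ = a₂ 0 := Nat.succ_pred_eq_of_pos (Nat.pos_of_ne_zero h20)
        · have h7 := congrFun hde i.succ
          simpa only [gkDown_succ] using h7
      have hrec : ∀ b : Fin (k+1) → ℕ, b 0 ≠ 0 → Fin.cons ((gkDown b) 0 + 1) (gkTail (gkDown b)) = b := by
        intro b hb0
        funext j
        refine Fin.cases ?_ (fun i => ?_) j
        · simp only [Fin.cons_zero, gkDown_zero]
          exact Nat.succ_pred_eq_of_pos (Nat.pos_of_ne_zero hb0)
        · simp only [Fin.cons_succ, gkTail_apply, gkDown_succ]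
      have hdsum : ∑ a' ∈ s1.image gkDown, a' 0 < D := by
        rw [Finset.sum_image hdinj]
        calc ∑ b ∈ s1, (gkDown b) 0 < ∑ b ∈ s1, b 0 := by
              refine Finset.sum_lt_sum_of_nonempty ⟨a, has1⟩ fun b hb => ?_
              simp only [gkDown_zero]
              exact Nat.sub_lt (Nat.pos_of_ne_zero (Finset.mem_filter.1 hb).2) one_pos
          _ ≤ ∑ b ∈ s, b 0 := Finset.sum_le_sum_of_subset (Finset.filter_subset _ _)
          _ = D := hD
      have hc''B : ∑ a' ∈ s1.image gkDown,
          c (Fin.cons (a' 0 + 1) (gkTail a')) • gkMon (k+1) x a' ∈ Q 0 := by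
        rw [Finset.sum_image hdinj]
        have h8 : ∑ b ∈ s1, c (Fin.cons ((gkDown b) 0 + 1) (gkTail (gkDown b)))
            • gkMon (k+1) x (gkDown b) = B := by
          refine Finset.sum_congr rfl fun b hb => ?_
          have hb0 : b 0 ≠ 0 := (Finset.mem_filter.1 hb).2
          rw [hrec b hb0, gkMon_succ]
          congr 1
        rw [h8]
        exact hBQ0
      have h9 := IHD _ hdsum (s1.image gkDown)
        (fun a' => c (Fin.cons (a' 0 + 1) (gkTail a'))) rfl hc''B
        (gkDown a) (Finset.mem_image_of_mem gkDown has1)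
      rw [← hrec a ha0]
      exact h9

lemma gkMon_mem_pow {K A : Type*} [Field K] [Ring A] [Algebra K A] (V : Submodule K A)
    (k : ℕ) (x : Fin k → A) (hx : ∀ i, x i ∈ V) (a : Fin k → ℕ) :
    gkMon k x a ∈ (1 ⊔ V) ^ (∑ i, a i) := by
  induction k with
  | zero =>
    simp only [Finset.univ_eq_empty, Finset.sum_empty, pow_zero]
    show (1 : A) ∈ (1 : Submodule K A)
    exact Submodule.one_le.mp le_rfl
  | succ k IH =>
    have h1 := IH (fun i => x i.succ) (fun i => hx i.succ) (fun i => a i.succ)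
    have h2 : x 0 ^ a 0 ∈ (1 ⊔ V) ^ (a 0) :=
      Submodule.pow_mem_pow _ (le_sup_right (α := Submodule K A) (hx 0)) _
    rw [Fin.sum_univ_succ, add_comm, pow_add]
    exact Submodule.mul_mem_mul h1 h2

lemma gk_pow_le_pow {K A : Type*} [Field K] [Ring A] [Algebra K A] (V : Submodule K A)
    {m n : ℕ} (h : m ≤ n) : (1 ⊔ V) ^ m ≤ (1 ⊔ V) ^ n := by
  induction n with
  | zero => rw [Nat.le_zero.mp h]
  | succ n IH =>
    rcases lt_or_eq_of_le h with h' | rfl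
    · refine le_trans (IH (Nat.lt_succ_iff.mp h')) ?_
      rw [pow_succ]
      nth_rewrite 1 [show (1 ⊔ V) ^ n = (1 ⊔ V) ^ n * 1 from (mul_one _).symm]
      exact mul_le_mul' le_rfl le_sup_left
    · exact le_rfl

lemma gk_fg_pow {K A : Type*} [Field K] [Ring A] [Algebra K A] (V : Submodule K A)
    (hV : FiniteDimensional K V) (n : ℕ) : FiniteDimensional K ↥((1 ⊔ V) ^ n) := by
  have h1 : (1 ⊔ V).FG := by
    refine Submodule.FG.sup ?_ (Module.Finite.iff_fg.mp hV)
    rw [Submodule.one_eq_span]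
    exact Submodule.fg_span_singleton _
  exact Module.Finite.iff_fg.mpr (h1.pow n)

open Filter in
lemma gk_lower {K A : Type*} [Field K] [Ring A] [Algebra K A] (k : ℕ) (x : Fin k → A)
    (li : LinearIndependent K (fun a : Fin k → ℕ => gkMon k x a)) :
    (k : ℝ≥0∞) ≤ gkDim K A := by
  rcases Nat.eq_zero_or_pos k with rfl | hk
  · simp
  classical
  set V := Submodule.span K (Set.range x) with hVdef
  have hV : FiniteDimensional K V := FiniteDimensional.span_of_finite K (Set.finite_range x)
  have hxV : ∀ i, x i ∈ V := fun i => Submodule.subset_span (Set.mem_range_self i)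
  -- dimension lower bound
  have main : ∀ n : ℕ, ((n / k + 1) ^ k : ℕ) ≤ Module.finrank K ↥((1 ⊔ V) ^ n) := by
    intro n
    set q := n / k with hq
    set e : (Fin k → Fin (q + 1)) → (Fin k → ℕ) := fun t i => (t i : ℕ) with he
    have einj : Function.Injective e := by
      intro t t' h
      funext i
      exact Fin.ext (congrFun h i)
    have li2 : LinearIndependent K (fun t : Fin k → Fin (q+1) => gkMon k x (e t)) := li.comp e einj
    have hmem : ∀ t : Fin k → Fin (q+1), gkMon k x (e t) ∈ (1 ⊔ V) ^ n := by
      intro t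
      refine gk_pow_le_pow V ?_ (gkMon_mem_pow V k x hxV (e t))
      calc ∑ i, e t i ≤ ∑ _i : Fin k, q := Finset.sum_le_sum fun i _ => Nat.lt_succ_iff.mp (t i).isLt
        _ = k * q := by simp [Finset.sum_const, mul_comm]
        _ = q * k := mul_comm _ _
        _ ≤ n := Nat.div_mul_le_self n k
    set v : (Fin k → Fin (q+1)) → ↥((1 ⊔ V) ^ n) := fun t => ⟨gkMon k x (e t), hmem t⟩ with hv
    have liv : LinearIndependent K v := by
      refine LinearIndependent.of_comp ((1 ⊔ V) ^ n).subtype ?_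
      exact li2
    haveI := gk_fg_pow V hV n
    have hcard := liv.fintype_card_le_finrank
    rwa [Fintype.card_fun, Fintype.card_fin, Fintype.card_fin] at hcard
  -- analytic part
  refine le_trans ?_ (le_iSup_of_le V (le_iSup_of_le hV le_rfl))
  set F : ℕ → ℝ≥0∞ := fun n =>
    ENNReal.ofReal (Real.log (Module.finrank K ↥((1 ⊔ V) ^ n)) / Real.log n) with hF
  -- the real lower bound sequence
  have hreal : ∀ n : ℕ, 2 ≤ n →
      (k : ℝ) - k * Real.log k / Real.log n ≤
        Real.log (Module.finrank K ↥((1 ⊔ V) ^ n)) / Real.log n := by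
    intro n hn
    have hn0 : (0 : ℝ) < n := by positivity
    have hlogn : 0 < Real.log n := Real.log_pos (by exact_mod_cast hn)
    have hk0 : (0 : ℝ) < k := by exact_mod_cast hk
    have hdiv : (n : ℝ) / k ≤ ((n / k + 1 : ℕ) : ℝ) := by
      have h1 : n < (n / k + 1) * k := by
        rw [add_mul, one_mul]
        exact Nat.lt_div_mul_add hk
      have h2 : (n : ℝ) < ((n / k + 1 : ℕ) : ℝ) * k := by exact_mod_cast h1
      rw [div_le_iff₀ hk0]
      exact le_of_lt h2
    have hfr : ((n : ℝ) / k) ^ k ≤ (Module.finrank K ↥((1 ⊔ V) ^ n) : ℝ) := by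
      calc ((n : ℝ) / k) ^ k ≤ (((n / k + 1 : ℕ) : ℝ)) ^ k := by
            exact pow_le_pow_left₀ (by positivity) hdiv k
        _ = (((n / k + 1) ^ k : ℕ) : ℝ) := by push_cast; ring
        _ ≤ _ := by exact_mod_cast main n
    have hlog : (k : ℝ) * (Real.log n - Real.log k) ≤
        Real.log (Module.finrank K ↥((1 ⊔ V) ^ n)) := by
      have h3 : Real.log (((n : ℝ) / k) ^ k) ≤
          Real.log (Module.finrank K ↥((1 ⊔ V) ^ n)) := by
        refine Real.log_le_log (by positivity) hfr
      rwa [Real.log_pow, Real.log_div (ne_of_gt hn0) (ne_of_gt hk0)] at h3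
    calc (k : ℝ) - k * Real.log k / Real.log n
        = (k * (Real.log n - Real.log k)) / Real.log n := by
          field_simp
      _ ≤ Real.log (Module.finrank K ↥((1 ⊔ V) ^ n)) / Real.log n :=
          (div_le_div_iff_of_pos_right hlogn).mpr hlog
  have tendsub : Filter.Tendsto (fun n : ℕ => (k : ℝ) - k * Real.log k / Real.log n) atTop
      (nhds (k : ℝ)) := by
    have hlogt : Filter.Tendsto (fun n : ℕ => Real.log n) atTop atTop :=
      Real.tendsto_log_atTop.comp tendsto_natCast_atTop_atTop
    have h0 : Filter.Tendsto (fun n : ℕ => (k : ℝ) * Real.log k / Real.log n) atTop (nhds 0) :=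
      Filter.Tendsto.div_atTop tendsto_const_nhds hlogt
    simpa using tendsto_const_nhds.sub h0
  have key : ∀ c : ℝ, c < (k : ℝ) → ENNReal.ofReal c ≤ limsup F atTop := by
    intro c hc
    have hev1 : ∀ᶠ n : ℕ in atTop, c < (k : ℝ) - k * Real.log k / Real.log n :=
      tendsub.eventually (eventually_gt_nhds hc)
    have hev2 : ∀ᶠ n : ℕ in atTop, ENNReal.ofReal c ≤ F n := by
      filter_upwards [hev1, eventually_ge_atTop 2] with n h1 h2
      exact ENNReal.ofReal_le_ofReal (le_trans h1.le (hreal n h2))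
    calc ENNReal.ofReal c = limsup (fun _ : ℕ => ENNReal.ofReal c) atTop := limsup_const _ |>.symm
      _ ≤ limsup F atTop := limsup_le_limsup hev2
  have htend2 : Filter.Tendsto (fun j : ℕ => ENNReal.ofReal ((k : ℝ) - 1 / (j + 1))) atTop
      (nhds ((k : ℕ) : ℝ≥0∞)) := by
    have h5 : Filter.Tendsto (fun j : ℕ => (k : ℝ) - 1 / (j + 1)) atTop (nhds (k : ℝ)) := by
      simpa using (tendsto_const_nhds : Filter.Tendsto (fun _ : ℕ => (k : ℝ)) atTop (nhds (k : ℝ))).sub tendsto_one_div_add_atTop_nhds_zero_nat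
    simpa [ENNReal.ofReal_natCast] using ENNReal.tendsto_ofReal h5
  refine le_of_tendsto htend2 (Filter.Eventually.of_forall fun j => ?_)
  refine key _ (sub_lt_self _ ?_)
  positivity

-- real work starts here
lemma gkMon_map {R S : Type*} [Ring R] [Ring S] (f : R →+* S) (k : ℕ) (x : Fin k → R)
    (a : Fin k → ℕ) : f (gkMon k x a) = gkMon k (fun i => f (x i)) a := by
  induction k with
  | zero => exact map_one f
  | succ k IH =>
    show f (gkMon k (fun i => x i.succ) (fun i => a i.succ) * x 0 ^ a 0) = _
    rw [map_mul, map_pow, IH]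
    rfl

section Chain

variable {K R : Type*} [Field K] [Ring R] [Algebra K R]

lemma gkChain_exists_x (k : ℕ) (Q : Fin (k+1) → TwoSidedIdeal R) (hSM : StrictMono Q) :
    ∃ x : Fin k → R, (∀ i : Fin k, x i ∈ Q i.succ) ∧ (∀ i : Fin k, x i ∉ Q i.castSucc) := by
  have h : ∀ i : Fin k, ∃ y : R, y ∈ Q i.succ ∧ y ∉ Q i.castSucc := by
    intro i
    obtain ⟨y, hy1, hy2⟩ := SetLike.exists_of_lt (hSM (Fin.castSucc_lt_succ : i.castSucc < i.succ))
    exact ⟨y, hy1, hy2⟩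
  choose x h1 h2 using h
  exact ⟨x, h1, h2⟩

lemma gkChain_gk (k : ℕ) (Q : Fin (k+1) → TwoSidedIdeal R) (hSM : StrictMono Q)
    (hCP : ∀ i, IsCompletelyPrime (Q i)) : (k : ℝ≥0∞) ≤ gkDim K R := by
  obtain ⟨x, h1, h2⟩ := gkChain_exists_x k Q hSM
  refine gk_lower k x (linearIndependent_iff'.mpr ?_)
  intro s g hs a ha
  refine gkCore k Q hSM.monotone hCP x h1 h2 s g ?_ a ha
  rw [hs]
  exact (Q 0).zero_mem

lemma gkChain_gk_quot (k : ℕ) (Q : Fin (k+1) → TwoSidedIdeal R) (hSM : StrictMono Q)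
    (hCP : ∀ i, IsCompletelyPrime (Q i)) (I : TwoSidedIdeal R) (hI : Q 0 = I) :
    (k : ℝ≥0∞) ≤ gkDim K I.ringCon.Quotient := by
  subst hI
  obtain ⟨x, h1, h2⟩ := gkChain_exists_x k Q hSM
  set π : R →+* (Q 0).ringCon.Quotient := RingCon.mk' _ with hπ
  refine gk_lower k (fun i => π (x i)) (linearIndependent_iff'.mpr ?_)
  intro s g hs a ha
  refine gkCore k Q hSM.monotone hCP x h1 h2 s g ?_ a ha
  have hz : π (∑ b ∈ s, g b • gkMon k x b) = 0 := by
    rw [map_sum, ← hs]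
    refine Finset.sum_congr rfl fun b _ => ?_
    rw [Algebra.smul_def, Algebra.smul_def, map_mul, gkMon_map]
    rfl
  have hmem : (Q 0).ringCon (∑ b ∈ s, g b • gkMon k x b) 0 := by
    rw [← RingCon.eq]
    exact hz
  exact hmem

end Chain

/-- **Theorem.** A `K`-algebra of finite or just infinite GK-dimension has ACC on
completely prime two-sided ideals; for a domain of finite GK-dimension, strictly
ascending chains of completely prime two-sided ideals have length at most `GKdim R`. -/
theorem acc_completely_prime_of_finite_or_justInfinite_gkDim
    (K : Type) [Field K] [CharZero K]
    (R : Type) [Ring R] [Algebra K R]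
    (hyp : gkDim K R < ⊤ ∨
      (gkDim K R = ⊤ ∧ ∀ I : TwoSidedIdeal R, I ≠ ⊥ →
        gkDim K I.ringCon.Quotient < ⊤)) :
    (∀ P : ℕ → TwoSidedIdeal R, Monotone P → (∀ m, IsCompletelyPrime (P m)) →
      ∃ N : ℕ, ∀ m, N ≤ m → P m = P N) ∧
    (IsDomain R → gkDim K R < ⊤ →
      ∀ (m : ℕ) (P : Fin (m + 1) → TwoSidedIdeal R), StrictMono P →
        (∀ i, IsCompletelyPrime (P i)) → (m : ℝ≥0∞) ≤ gkDim K R) := by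
  constructor
  · intro P hmono hCP
    by_contra hno
    push_neg at hno
    choose nxt hnxt1 hnxt2 using hno
    let g : ℕ → ℕ := fun j => Nat.rec 0 (fun _ prev => nxt prev) j
    have hgsucc : ∀ j, g (j + 1) = nxt (g j) := fun j => rfl
    have hg : ∀ j, P (g j) < P (g (j + 1)) := by
      intro j
      rw [hgsucc]
      exact lt_of_le_of_ne (hmono (hnxt1 (g j))) (Ne.symm (hnxt2 (g j)))
    have hgs : StrictMono (fun j => P (g j)) := strictMono_nat_of_lt_succ hg
    rcases hyp with hfin | ⟨_, hquot⟩
    · obtain ⟨k, hk⟩ := ENNReal.exists_nat_gt hfin.ne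
      have hb := gkChain_gk (K := K) k (fun i : Fin (k+1) => P (g (i : ℕ)))
        (fun i j hij => hgs (by exact_mod_cast hij))
        (fun i => hCP _)
      exact absurd hb (not_le.mpr hk)
    · have hI : P (g 1) ≠ ⊥ := by
        intro hbot
        have h01 : P (g 0) < P (g 1) := hg 0
        rw [hbot] at h01
        exact not_lt_bot h01
      obtain ⟨k, hk⟩ := ENNReal.exists_nat_gt (hquot (P (g 1)) hI).ne
      have hb := gkChain_gk_quot (K := K) k (fun i : Fin (k+1) => P (g (1 + (i : ℕ))))
        (fun i j hij => hgs (by have : (i : ℕ) < (j : ℕ) := hij; omega))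
        (fun i => hCP _) (P (g 1)) (by norm_num)
      exact absurd hb (not_le.mpr hk)
  · intro _ _ m P hSM hCP
    exact gkChain_gk m P hSM hCP
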